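/- Let 𝒜 ⊆ ℝ³ be an open set, let C : 𝒜 → (alternating trilinear forms on ℝ³) be continuous, and suppose the set {a ∈ 𝒜 : C(a) ≠ 0} is dense in 𝒜. Let f : 𝒜 × ℝ³ → ℝ be continuously differentiable with f(a, α + 2πν) = f(a, α) for all ν ∈ ℤ³, and assume that for every (a,α) ∈ 𝒜 × ℝ³ the vector ∂f/∂α(a,α) ∈ ℝ³ lies in ker C(a), i.e. C(a)(∂f/∂α(a,α), u, v) = 0 for all u,v ∈ ℝ³. Then ∂f/∂α(a,α) = 0 for all (a,α) ∈ 𝒜 × ℝ³; that is, f is independent of the angles α. -/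

import Mathlib

/-- A nonzero alternating 3-form on `ℝ³` has trivial kernel. -/
lemma kerA (T : (Fin 3 → ℝ) [⋀^Fin 3]→ₗ[ℝ] ℝ) (hT : T ≠ 0) (x : Fin 3 → ℝ)
    (hx : ∀ u v, T ![x, u, v] = 0) : x = 0 := by
  have hTe : T = T (Pi.basisFun ℝ (Fin 3)) • (Pi.basisFun ℝ (Fin 3)).det :=
    T.eq_smul_basis_det (Pi.basisFun ℝ (Fin 3))
  have hc : T ⇑(Pi.basisFun ℝ (Fin 3)) ≠ 0 := by
    intro h; apply hT; rw [hTe, h, zero_smul]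
  funext i
  fin_cases i
  · have h := hx (Pi.basisFun ℝ (Fin 3) 1) (Pi.basisFun ℝ (Fin 3) 2)
    rw [hTe] at h
    simp [-Pi.basisFun_det, Module.Basis.det_apply, Module.Basis.toMatrix, Matrix.det_fin_three, Matrix.vecHead,
      Matrix.vecTail] at h
    tauto
  · have h := hx (Pi.basisFun ℝ (Fin 3) 0) (Pi.basisFun ℝ (Fin 3) 2)
    rw [hTe] at h
    simp [-Pi.basisFun_det, Module.Basis.det_apply, Module.Basis.toMatrix, Matrix.det_fin_three, Matrix.vecHead,
      Matrix.vecTail] at h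
    tauto
  · have h := hx (Pi.basisFun ℝ (Fin 3) 0) (Pi.basisFun ℝ (Fin 3) 1)
    rw [hTe] at h
    simp [-Pi.basisFun_det, Module.Basis.det_apply, Module.Basis.toMatrix, Matrix.det_fin_three, Matrix.vecHead,
      Matrix.vecTail] at h
    tauto

/-- The vector `∂f/∂α (a, α) ∈ ℝ³` of partial derivatives of `f` with respect to the second
group of variables (the angles). -/
noncomputable def dAngle3 (f : (Fin 3 → ℝ) × (Fin 3 → ℝ) → ℝ)
    (p : (Fin 3 → ℝ) × (Fin 3 → ℝ)) : Fin 3 → ℝ :=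
  fun k => fderiv ℝ (fun α => f (p.1, α)) p.2 (Pi.single k 1)

/-- The partial derivative in the angles equals the full derivative applied to `(0, eₖ)`. -/
lemma dAngle3_eq_fderiv (𝒜 : Set (Fin 3 → ℝ)) (hopen : IsOpen 𝒜)
    (f : (Fin 3 → ℝ) × (Fin 3 → ℝ) → ℝ)
    (hf : ContDiffOn ℝ 1 f (𝒜 ×ˢ (Set.univ : Set (Fin 3 → ℝ))))
    (a : Fin 3 → ℝ) (ha : a ∈ 𝒜) (α : Fin 3 → ℝ) (k : Fin 3) :
    dAngle3 f (a, α) k = fderiv ℝ f (a, α) (0, Pi.single k 1) := by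
  have hop : IsOpen (𝒜 ×ˢ (Set.univ : Set (Fin 3 → ℝ))) := hopen.prod isOpen_univ
  have hmem : ((a, α) : (Fin 3 → ℝ) × (Fin 3 → ℝ)) ∈ 𝒜 ×ˢ (Set.univ : Set (Fin 3 → ℝ)) :=
    ⟨ha, trivial⟩
  have hdiff : DifferentiableAt ℝ f (a, α) :=
    (hf.differentiableOn one_ne_zero).differentiableAt (hop.mem_nhds hmem)
  have h1 : HasFDerivAt (fun β => f (a, β))
      ((fderiv ℝ f (a, α)).comp (ContinuousLinearMap.inr ℝ (Fin 3 → ℝ) (Fin 3 → ℝ))) α :=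
    hdiff.hasFDerivAt.comp α (hasFDerivAt_prodMk_right a α)
  simp [dAngle3, h1.fderiv]

/-- Let `𝒜 ⊆ ℝ³` be open, `C : 𝒜 → {alternating trilinear forms on ℝ³}`
continuous, with `{a ∈ 𝒜 : C(a) ≠ 0}` dense in `𝒜`.  Let `f : 𝒜 × ℝ³ → ℝ` be continuously
differentiable, `2π`-periodic in the angles, with `∂f/∂α (a, α) ∈ ker C(a)` always.
Then `∂f/∂α ≡ 0` on `𝒜 × ℝ³`: `f` is independent of the angles. -/
theorem statement6 (𝒜 : Set (Fin 3 → ℝ)) (hopen : IsOpen 𝒜)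
    (C : (Fin 3 → ℝ) → ((Fin 3 → ℝ) [⋀^Fin 3]→ₗ[ℝ] ℝ))
    (hCcont : ∀ u v w : Fin 3 → ℝ, ContinuousOn (fun a => C a ![u, v, w]) 𝒜)
    (hdense : 𝒜 ⊆ closure {a ∈ 𝒜 | C a ≠ 0})
    (f : (Fin 3 → ℝ) × (Fin 3 → ℝ) → ℝ)
    (hf : ContDiffOn ℝ 1 f (𝒜 ×ˢ (Set.univ : Set (Fin 3 → ℝ))))
    (hper : ∀ (a α : Fin 3 → ℝ) (ν : Fin 3 → ℤ),
      f (a, α + fun i => 2 * Real.pi * (ν i : ℝ)) = f (a, α))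
    (hker : ∀ a ∈ 𝒜, ∀ α : Fin 3 → ℝ, ∀ u v : Fin 3 → ℝ,
      C a ![dAngle3 f (a, α), u, v] = 0) :
    ∀ a ∈ 𝒜, ∀ α : Fin 3 → ℝ, dAngle3 f (a, α) = 0 := by
  intro a ha α
  -- the set where C is nonzero
  set S : Set (Fin 3 → ℝ) := {a ∈ 𝒜 | C a ≠ 0} with hS
  have hSsub : S ⊆ 𝒜 := fun b hb => hb.1
  -- on S the angle derivative vanishes
  have hzeroS : ∀ b ∈ S, dAngle3 f (b, α) = 0 := fun b hb =>
    kerA (C b) hb.2 _ (hker b hb.1 α)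
  funext k
  -- continuity of the angle derivative in `a`
  have hop : IsOpen (𝒜 ×ˢ (Set.univ : Set (Fin 3 → ℝ))) := hopen.prod isOpen_univ
  have hfd : ContinuousOn (fderiv ℝ f) (𝒜 ×ˢ (Set.univ : Set (Fin 3 → ℝ))) :=
    hf.continuousOn_fderiv_of_isOpen hop le_rfl
  have hcont : ContinuousOn (fun b => fderiv ℝ f (b, α) (0, Pi.single k 1)) 𝒜 := by
    have h1 : ContinuousOn (fun b => fderiv ℝ f (b, α)) 𝒜 :=
      hfd.comp (Continuous.continuousOn (by continuity)) (fun b hb => ⟨hb, trivial⟩)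
    exact ((ContinuousLinearMap.apply ℝ ℝ
      ((0, Pi.single k 1) : (Fin 3 → ℝ) × (Fin 3 → ℝ))).continuous.comp_continuousOn h1)
  set g : (Fin 3 → ℝ) → ℝ := fun b => fderiv ℝ f (b, α) (0, Pi.single k 1) with hg
  -- limiting argument along S
  have hne : (nhdsWithin a S).NeBot := mem_closure_iff_nhdsWithin_neBot.mp (hdense ha)
  have ht1 : Filter.Tendsto g (nhdsWithin a S) (nhds (g a)) :=
    ((hcont a ha).mono hSsub)
  have ht2 : Filter.Tendsto g (nhdsWithin a S) (nhds 0) := by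
    apply Filter.Tendsto.congr' _ tendsto_const_nhds
    filter_upwards [self_mem_nhdsWithin] with b hb
    have hgb : g b = 0 := by
      rw [hg]
      simp only
      rw [← dAngle3_eq_fderiv 𝒜 hopen f hf b hb.1 α k, hzeroS b hb]
      rfl
    exact hgb.symm
  have : g a = 0 := tendsto_nhds_unique ht1 ht2
  rw [dAngle3_eq_fderiv 𝒜 hopen f hf a ha α k]
  exact this
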